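/- Let ρ0 and ρ1 be n×n complex density matrices and let F = Tr(√(√ρ0 · ρ1 · √ρ0)) be their fidelity. Then F² ≤ Tr(P1 ρ0) and F² ≤ Tr(P0 ρ1), where P0 and P1 are the orthogonal projections onto the ranges of ρ0 and ρ1. -/

import Mathlib

open Matrix
open scoped ComplexOrder

/-- The positive semidefinite square root of a matrix (zero if the matrix is not
positive semidefinite). -/
noncomputable def msqrt {n : ℕ} (A : Matrix (Fin n) (Fin n) ℂ) : Matrix (Fin n) (Fin n) ℂ :=
  open scoped Classical in
  if h : A.PosSemidef then
    h.1.eigenvectorUnitary.1 * diagonal ((↑) ∘ (√·) ∘ h.1.eigenvalues) *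
      (star h.1.eigenvectorUnitary : Matrix (Fin n) (Fin n) ℂ)
  else 0

/-- `P` is the orthogonal projection onto the range (support) of `A`. -/
def IsRangeProj {n : ℕ} (A P : Matrix (Fin n) (Fin n) ℂ) : Prop :=
  P.IsHermitian ∧ P * P = P ∧
    LinearMap.range P.mulVecLin = LinearMap.range A.mulVecLin

/-- The positive semidefinite square root of a PSD matrix. -/
noncomputable abbrev Matrix.PosSemidef.sqrt {n : ℕ} {A : Matrix (Fin n) (Fin n) ℂ}
    (h : A.PosSemidef) : Matrix (Fin n) (Fin n) ℂ :=
  h.1.eigenvectorUnitary.1 * diagonal ((↑) ∘ (√·) ∘ h.1.eigenvalues) *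
    (star h.1.eigenvectorUnitary : Matrix (Fin n) (Fin n) ℂ)

lemma Matrix.PosSemidef.posSemidef_sqrt {n : ℕ} {A : Matrix (Fin n) (Fin n) ℂ}
    (h : A.PosSemidef) : h.sqrt.PosSemidef := by
  have hd : (diagonal ((↑) ∘ (√·) ∘ h.1.eigenvalues : Fin n → ℂ)).PosSemidef := by
    refine posSemidef_diagonal_iff.mpr fun i => ?_
    simp only [Function.comp_apply]
    exact_mod_cast Real.sqrt_nonneg _
  have := hd.mul_mul_conjTranspose_same (h.1.eigenvectorUnitary : Matrix (Fin n) (Fin n) ℂ)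
  exact this

lemma Matrix.PosSemidef.sqrt_mul_self {n : ℕ} {A : Matrix (Fin n) (Fin n) ℂ}
    (h : A.PosSemidef) : h.sqrt * h.sqrt = A := by
  have h1 : (star h.1.eigenvectorUnitary : Matrix (Fin n) (Fin n) ℂ) *
      (h.1.eigenvectorUnitary : Matrix (Fin n) (Fin n) ℂ) = 1 :=
    Matrix.UnitaryGroup.star_mul_self _
  have hs := h.1.spectral_theorem
  rw [Unitary.conjStarAlgAut_apply] at hs
  conv_rhs => rw [hs]
  calc h.sqrt * h.sqrt = (h.1.eigenvectorUnitary : Matrix (Fin n) (Fin n) ℂ) *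
        (diagonal ((↑) ∘ (√·) ∘ h.1.eigenvalues) *
          ((star h.1.eigenvectorUnitary : Matrix (Fin n) (Fin n) ℂ) *
            (h.1.eigenvectorUnitary : Matrix (Fin n) (Fin n) ℂ)) *
          diagonal ((↑) ∘ (√·) ∘ h.1.eigenvalues)) *
        (star h.1.eigenvectorUnitary : Matrix (Fin n) (Fin n) ℂ) := by
        simp only [Matrix.PosSemidef.sqrt, Matrix.mul_assoc]
    _ = _ := by
        rw [h1, Matrix.mul_one, diagonal_mul_diagonal]
        congr 3
        funext i
        simp only [Function.comp_apply]
        rw [← Complex.ofReal_mul, Real.mul_self_sqrt (h.eigenvalues_nonneg i)]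
        rfl

namespace FidelityAux

variable {n : ℕ}

/-- Cauchy–Schwarz for the Frobenius inner product. -/
lemma cs_trace (X Y : Matrix (Fin n) (Fin n) ℂ) :
    ‖(Xᴴ * Y).trace‖ ^ 2 ≤ ((Xᴴ * X).trace.re) * ((Yᴴ * Y).trace.re) := by
  let f : Matrix (Fin n) (Fin n) ℂ → EuclideanSpace ℂ (Fin n × Fin n) :=
    fun M => (WithLp.equiv 2 _).symm (fun p => M p.1 p.2)
  have key : ∀ M N : Matrix (Fin n) (Fin n) ℂ,
      (Mᴴ * N).trace = (inner ℂ (f M) (f N) : ℂ) := by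
    intro M N
    rw [show inner ℂ (f M) (f N) = star (fun p : Fin n × Fin n => M p.1 p.2) ⬝ᵥ
      (fun p : Fin n × Fin n => N p.1 p.2) from dotProduct_comm _ _]
    simp only [Matrix.trace, Matrix.diag, Matrix.mul_apply, Matrix.conjTranspose_apply,
      dotProduct, Pi.star_apply, Fintype.sum_prod_type, RCLike.star_def]
    rw [Finset.sum_comm]
  rw [key, key, key]
  have h := norm_inner_le_norm (𝕜 := ℂ) (f X) (f Y)
  have hx : (inner ℂ (f X) (f X) : ℂ).re = ‖f X‖ ^ 2 := by
    have := inner_self_eq_norm_sq (𝕜 := ℂ) (f X); rwa [RCLike.re_to_complex] at this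
  have hy : (inner ℂ (f Y) (f Y) : ℂ).re = ‖f Y‖ ^ 2 := by
    have := inner_self_eq_norm_sq (𝕜 := ℂ) (f Y); rwa [RCLike.re_to_complex] at this
  rw [hx, hy]
  calc ‖(inner ℂ (f X) (f Y) : ℂ)‖ ^ 2 ≤ (‖f X‖ * ‖f Y‖) ^ 2 := by
        apply pow_le_pow_left₀ (norm_nonneg _) h
    _ = ‖f X‖ ^ 2 * ‖f Y‖ ^ 2 := by ring

/-- If `1 - WᴴW` is PSD then so is `1 - WWᴴ`. -/
lemma opp (W : Matrix (Fin n) (Fin n) ℂ) (h : (1 - Wᴴ * W).PosSemidef) :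
    (1 - W * Wᴴ).PosSemidef := by
  classical
  set nr : (Fin n → ℂ) → ℝ := fun v => ‖(WithLp.equiv 2 (Fin n → ℂ)).symm v‖ with hnr
  have hnn : ∀ v, 0 ≤ nr v := fun v => norm_nonneg _
  have hsq : ∀ v : Fin n → ℂ, (star v ⬝ᵥ v) = ((nr v : ℂ)) ^ 2 := by
    intro v
    have := inner_self_eq_norm_sq_to_K (𝕜 := ℂ) ((WithLp.equiv 2 (Fin n → ℂ)).symm v)
    rwa [show inner ℂ ((WithLp.equiv 2 (Fin n → ℂ)).symm v) ((WithLp.equiv 2 (Fin n → ℂ)).symm v)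
      = star v ⬝ᵥ v from dotProduct_comm _ _] at this
  have hcs : ∀ v w : Fin n → ℂ, ‖star v ⬝ᵥ w‖ ≤ nr v * nr w := by
    intro v w
    have := norm_inner_le_norm (𝕜 := ℂ) ((WithLp.equiv 2 (Fin n → ℂ)).symm v)
      ((WithLp.equiv 2 (Fin n → ℂ)).symm w)
    rwa [show inner ℂ ((WithLp.equiv 2 (Fin n → ℂ)).symm v) ((WithLp.equiv 2 (Fin n → ℂ)).symm w)
      = star v ⬝ᵥ w from dotProduct_comm _ _] at this
  have hWle : ∀ v : Fin n → ℂ, nr (W *ᵥ v) ≤ nr v := by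
    intro v
    have h2 := h.dotProduct_mulVec_nonneg v
    rw [sub_mulVec, one_mulVec, dotProduct_sub, sub_nonneg] at h2
    have heq : star v ⬝ᵥ (Wᴴ * W) *ᵥ v = star (W *ᵥ v) ⬝ᵥ (W *ᵥ v) := by
      rw [← mulVec_mulVec, dotProduct_mulVec, ← star_mulVec]
    rw [heq, hsq, hsq, ← Complex.ofReal_pow, ← Complex.ofReal_pow,
      Complex.real_le_real] at h2
    exact (pow_le_pow_iff_left₀ (hnn _) (hnn _) two_ne_zero).mp h2
  refine Matrix.PosSemidef.of_dotProduct_mulVec_nonneg ?_ ?_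
  · exact isHermitian_one.sub (isHermitian_mul_conjTranspose_self W)
  · intro x
    set y := Wᴴ *ᵥ x with hy
    have heq : star x ⬝ᵥ (W * Wᴴ) *ᵥ x = star y ⬝ᵥ y := by
      rw [← mulVec_mulVec, dotProduct_mulVec, hy, star_mulVec, conjTranspose_conjTranspose]
    rw [sub_mulVec, one_mulVec, dotProduct_sub, heq, sub_nonneg]
    -- key norm bound : nr y ≤ nr x
    have hyx : nr y ≤ nr x := by
      rcases eq_or_lt_of_le (hnn y) with h0 | h0
    -- if nr y = 0 trivial
      · rw [← h0]; exact hnn x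
      · have h1 : star y ⬝ᵥ y = star x ⬝ᵥ (W *ᵥ y) := by
          conv_lhs => rw [hy, star_mulVec, conjTranspose_conjTranspose]
          rw [← dotProduct_mulVec]
        have h2 : (nr y : ℝ) ^ 2 ≤ nr x * nr y := by
          have := hcs x (W *ᵥ y)
          have h3 : ‖star y ⬝ᵥ y‖ = (nr y) ^ 2 := by
            rw [hsq, ← Complex.ofReal_pow, Complex.norm_real, Real.norm_eq_abs,
              abs_of_nonneg (by positivity)]
          calc (nr y : ℝ) ^ 2 = ‖star y ⬝ᵥ y‖ := h3.symm
            _ = ‖star x ⬝ᵥ (W *ᵥ y)‖ := by rw [h1]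
            _ ≤ nr x * nr (W *ᵥ y) := hcs x (W *ᵥ y)
            _ ≤ nr x * nr y := by
                exact mul_le_mul_of_nonneg_left (hWle y) (hnn x)
        nlinarith [h2, h0]
    rw [hsq, hsq, ← Complex.ofReal_pow, ← Complex.ofReal_pow, Complex.real_le_real]
    exact pow_le_pow_left₀ (hnn y) hyx 2

/-- Trace of a PSD matrix is nonnegative (in the complex order). -/
lemma trace_nonneg {M : Matrix (Fin n) (Fin n) ℂ} (hM : M.PosSemidef) :
    0 ≤ M.trace := by
  classical
  rw [Matrix.trace]
  apply Finset.sum_nonneg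
  intro i _
  have := hM.dotProduct_mulVec_nonneg (Pi.single i 1)
  have h2 : star (Pi.single i 1 : Fin n → ℂ) ⬝ᵥ (M *ᵥ Pi.single i 1) = M i i := by
    simp [dotProduct, Pi.single_apply, apply_ite, Finset.sum_ite_eq]
  rw [h2] at this
  exact this

lemma trace_mul_le {M D : Matrix (Fin n) (Fin n) ℂ} (hM : M.PosSemidef)
    (hD : (1 - D).PosSemidef) : (M * D).trace.re ≤ M.trace.re := by
  classical
  have hpsd : (hM.sqrt * (1 - D) * hM.sqrtᴴ).PosSemidef :=
    hD.mul_mul_conjTranspose_same hM.sqrt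
  rw [hM.posSemidef_sqrt.1.eq] at hpsd
  have htr : (hM.sqrt * (1 - D) * hM.sqrt).trace = M.trace - (M * D).trace := by
    rw [trace_mul_cycle, hM.sqrt_mul_self, Matrix.mul_sub,
      Matrix.mul_one, trace_sub]
  have h0 := trace_nonneg hpsd
  rw [htr] at h0
  have := (RCLike.nonneg_iff.mp h0).1
  simpa [sub_nonneg] using this

/-- A range projection fixes the matrix: `P * A = A`. -/
lemma proj_fix {A P : Matrix (Fin n) (Fin n) ℂ}
    (hH : P.IsHermitian) (hid : P * P = P)
    (hr : LinearMap.range P.mulVecLin = LinearMap.range A.mulVecLin) :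
    P * A = A := by
  classical
  have hvec : ∀ x, P *ᵥ (A *ᵥ x) = A *ᵥ x := by
    intro x
    have hx : A *ᵥ x ∈ LinearMap.range P.mulVecLin := by
      rw [hr]; exact ⟨x, rfl⟩
    obtain ⟨u, hu⟩ := hx
    simp only [mulVecLin_apply] at hu
    rw [← hu, mulVec_mulVec, hid]
  ext i j
  have := congrFun (hvec (Pi.single j 1)) i
  rw [mulVec_mulVec] at this
  simpa [mulVec_mulVec] using this

end FidelityAux

namespace FidelityAux2

variable {n : ℕ} {M : Matrix (Fin n) (Fin n) ℂ} (hM : M.PosSemidef)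

/-- Conjugation of a real diagonal by the eigenvector unitary of `M`. -/
noncomputable def Em (f : Fin n → ℝ) : Matrix (Fin n) (Fin n) ℂ :=
  (hM.1.eigenvectorUnitary : Matrix (Fin n) (Fin n) ℂ) *
    diagonal (fun i => (f i : ℂ)) *
    (star hM.1.eigenvectorUnitary : Matrix (Fin n) (Fin n) ℂ)

lemma Em_mul_Em (f g : Fin n → ℝ) : Em hM f * Em hM g = Em hM (f * g) := by
  have h1 : (star hM.1.eigenvectorUnitary : Matrix (Fin n) (Fin n) ℂ) *
      (hM.1.eigenvectorUnitary : Matrix (Fin n) (Fin n) ℂ) = 1 :=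
    Matrix.UnitaryGroup.star_mul_self _
  rw [Em, Em, Em]
  rw [Matrix.mul_assoc, Matrix.mul_assoc,
    ← Matrix.mul_assoc (star hM.1.eigenvectorUnitary : Matrix (Fin n) (Fin n) ℂ),
    ← Matrix.mul_assoc (star hM.1.eigenvectorUnitary : Matrix (Fin n) (Fin n) ℂ), h1,
    Matrix.one_mul, ← Matrix.mul_assoc, ← Matrix.mul_assoc,
    Matrix.mul_assoc _ _ (diagonal _), diagonal_mul_diagonal]
  simp only [Pi.mul_apply, Complex.ofReal_mul]

lemma Em_herm (f : Fin n → ℝ) : (Em hM f).IsHermitian := by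
  have hd : (diagonal (fun i => ((f i : ℝ) : ℂ))).IsHermitian :=
    isHermitian_diagonal_of_self_adjoint _ (funext fun i => by simp)
  rw [Em, Matrix.star_eq_conjTranspose]
  exact isHermitian_mul_mul_conjTranspose _ hd

lemma Em_psd (f : Fin n → ℝ) (hf : ∀ i, 0 ≤ f i) : (Em hM f).PosSemidef := by
  have hd : (diagonal (fun i => ((f i : ℝ) : ℂ))).PosSemidef := by
    refine posSemidef_diagonal_iff.mpr fun i => ?_
    rw [RCLike.nonneg_iff]
    constructor
    · simpa using hf i
    · simp
  have := hd.mul_mul_conjTranspose_same (hM.1.eigenvectorUnitary : Matrix (Fin n) (Fin n) ℂ)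
  rwa [Em, Matrix.star_eq_conjTranspose]

lemma Em_one : Em hM 1 = 1 := by
  have h2 : (hM.1.eigenvectorUnitary : Matrix (Fin n) (Fin n) ℂ) *
      (star hM.1.eigenvectorUnitary : Matrix (Fin n) (Fin n) ℂ) = 1 :=
    hM.1.eigenvectorUnitary.2.2
  rw [Em]
  have : diagonal (fun i => ((1 : Fin n → ℝ) i : ℂ)) = 1 := by simp
  rw [this, Matrix.mul_one, h2]

lemma Em_sub (f g : Fin n → ℝ) : Em hM f - Em hM g = Em hM (f - g) := by
  rw [Em, Em, Em, ← Matrix.sub_mul, ← Matrix.mul_sub, diagonal_sub]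
  simp only [Pi.sub_apply, Complex.ofReal_sub]

lemma sqrt_eq_Em : hM.sqrt = Em hM (Real.sqrt ∘ hM.1.eigenvalues) := rfl

lemma self_eq_Em : M = Em hM hM.1.eigenvalues := by
  have := hM.1.spectral_theorem
  rw [Unitary.conjStarAlgAut_apply] at this
  rw [Em]
  exact this

/-- `sqrt M = M * K` for some `K`. -/
lemma sqrt_factor : ∃ K : Matrix (Fin n) (Fin n) ℂ, hM.sqrt = M * K := by
  refine ⟨Em hM (fun i => (Real.sqrt (hM.1.eigenvalues i))⁻¹), ?_⟩
  have h1 : hM.sqrt =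
      Em hM hM.1.eigenvalues * Em hM (fun i => (Real.sqrt (hM.1.eigenvalues i))⁻¹) := by
    rw [Em_mul_Em, sqrt_eq_Em]
    refine congrArg (Em hM) (funext fun i => ?_)
    show Real.sqrt (hM.1.eigenvalues i) =
      hM.1.eigenvalues i * (Real.sqrt (hM.1.eigenvalues i))⁻¹
    rcases eq_or_lt_of_le (hM.eigenvalues_nonneg i) with h0 | h0
    · rw [← h0]; simp
    · have hs : Real.sqrt (hM.1.eigenvalues i) ≠ 0 := by positivity
      have h2 : hM.1.eigenvalues i =
          Real.sqrt (hM.1.eigenvalues i) * Real.sqrt (hM.1.eigenvalues i) :=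
        (Real.mul_self_sqrt (le_of_lt h0)).symm
      rw [h2]
      rw [Real.sqrt_mul_self (Real.sqrt_nonneg _), mul_assoc, mul_inv_cancel₀ hs, mul_one]
  rw [h1, ← self_eq_Em]

end FidelityAux2

open FidelityAux FidelityAux2

/-- The squared fidelity of two density matrices is bounded by `Tr(P1 ρ0)` and
by `Tr(P0 ρ1)`. -/
theorem fidelity_sq_le_trace_proj {n : ℕ}
    (ρ0 ρ1 P0 P1 : Matrix (Fin n) (Fin n) ℂ)
    (hρ0 : ρ0.PosSemidef) (hρ0tr : ρ0.trace = 1)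
    (hρ1 : ρ1.PosSemidef) (hρ1tr : ρ1.trace = 1)
    (hP0 : IsRangeProj ρ0 P0) (hP1 : IsRangeProj ρ1 P1) :
    ((msqrt (msqrt ρ0 * ρ1 * msqrt ρ0)).trace.re) ^ 2 ≤ (P1 * ρ0).trace.re ∧
      ((msqrt (msqrt ρ0 * ρ1 * msqrt ρ0)).trace.re) ^ 2 ≤ (P0 * ρ1).trace.re := by
  classical
  obtain ⟨hP0H, hP0idem, hP0r⟩ := hP0
  obtain ⟨hP1H, hP1idem, hP1r⟩ := hP1
  set s0 := hρ0.sqrt with hs0def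
  set s1 := hρ1.sqrt with hs1def
  have hmsq0 : msqrt ρ0 = s0 := by rw [msqrt, dif_pos hρ0]
  have hs0H : s0ᴴ = s0 := hρ0.posSemidef_sqrt.1
  have hs1H : s1ᴴ = s1 := hρ1.posSemidef_sqrt.1
  have hA : (s0 * ρ1 * s0).PosSemidef := by
    have := hρ1.mul_mul_conjTranspose_same s0
    rwa [hs0H] at this
  have hmsqA : msqrt (msqrt ρ0 * ρ1 * msqrt ρ0) = hA.sqrt := by
    rw [hmsq0, msqrt, dif_pos hA]
  rw [hmsqA]
  set B := hA.sqrt with hBdef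
  have hBH : Bᴴ = B := hA.posSemidef_sqrt.1
  set e := hA.1.eigenvalues with hedef
  set χ : Fin n → ℝ := fun i => Real.sqrt (e i) * (Real.sqrt (e i))⁻¹ with hχ
  set Bp := Em hA (fun i => (Real.sqrt (e i))⁻¹) with hBpdef
  set Pr := Em hA χ with hPrdef
  have hBpH : Bpᴴ = Bp := Em_herm hA _
  have hPrH : Prᴴ = Pr := Em_herm hA _
  have hBEm : B = Em hA (Real.sqrt ∘ e) := sqrt_eq_Em hA
  have hBBp : B * Bp = Pr := by rw [hBEm, hBpdef, Em_mul_Em, hPrdef]; rfl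
  have hBpB : Bp * B = Pr := by
    rw [hBEm, hBpdef, Em_mul_Em, hPrdef]
    exact congrArg (Em hA) (funext fun i => mul_comm _ _)
  have hPrB : Pr * B = B := by
    rw [hBEm, hPrdef, Em_mul_Em]
    refine congrArg (Em hA) (funext fun i => ?_)
    show χ i * Real.sqrt (e i) = Real.sqrt (e i)
    by_cases h : Real.sqrt (e i) = 0
    · simp [hχ, h]
    · simp [hχ, mul_inv_cancel₀ h]
  have hBPr : B * Pr = B := by
    have h := congrArg Matrix.conjTranspose hPrB
    rwa [conjTranspose_mul, hBH, hPrH] at h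
  have hPr1 : ((1 : Matrix (Fin n) (Fin n) ℂ) - Pr).PosSemidef := by
    have h1 : (1 : Matrix (Fin n) (Fin n) ℂ) - Pr = Em hA (1 - χ) := by
      rw [hPrdef, ← Em_one hA, Em_sub]
    rw [h1]
    refine Em_psd hA _ fun i => ?_
    have hle : χ i ≤ 1 := by
      by_cases h : Real.sqrt (e i) = 0
      · simp [hχ, h]
      · simp [hχ, mul_inv_cancel₀ h]
    simpa using hle
  set W := s1 * s0 * Bp with hWdef
  have hCC : (s1 * s0)ᴴ * (s1 * s0) = B * B := by
    have key : s0 * s1 * (s1 * s0) = s0 * ρ1 * s0 := by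
      conv_rhs => rw [← hρ1.sqrt_mul_self]
      simp only [Matrix.mul_assoc]
      simp only [hs1def, Matrix.mul_assoc]
    rw [conjTranspose_mul, hs0H, hs1H, key, ← hA.sqrt_mul_self]
  have hB0 : B * ((1 : Matrix (Fin n) (Fin n) ℂ) - Pr) = 0 := by
    rw [Matrix.mul_sub, Matrix.mul_one, hBPr, sub_self]
  have hB0' : ((1 : Matrix (Fin n) (Fin n) ℂ) - Pr) * B = 0 := by
    rw [Matrix.sub_mul, Matrix.one_mul, hPrB, sub_self]
  have hWB : W * B = s1 * s0 := by
    have h1 : W * B = (s1 * s0) * Pr := by rw [hWdef, Matrix.mul_assoc, hBpB]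
    have hPr1H : ((1 : Matrix (Fin n) (Fin n) ℂ) - Pr)ᴴ = 1 - Pr := by
      rw [conjTranspose_sub, conjTranspose_one, hPrH]
    have h2 : ((s1 * s0) * (1 - Pr))ᴴ * ((s1 * s0) * (1 - Pr)) = 0 := by
      rw [conjTranspose_mul, hPr1H]
      calc (1 - Pr) * (s1 * s0)ᴴ * ((s1 * s0) * (1 - Pr))
          = (1 - Pr) * (((s1 * s0)ᴴ * (s1 * s0)) * (1 - Pr)) := by
            simp only [Matrix.mul_assoc]
        _ = (1 - Pr) * ((B * B) * (1 - Pr)) := by rw [hCC]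
        _ = ((1 - Pr) * B) * (B * (1 - Pr)) := by simp only [Matrix.mul_assoc]
        _ = 0 := by rw [hB0, hB0', Matrix.zero_mul]
    have h3 : (s1 * s0) * ((1 : Matrix (Fin n) (Fin n) ℂ) - Pr) = 0 :=
      conjTranspose_mul_self_eq_zero.mp h2
    rw [Matrix.mul_sub, Matrix.mul_one] at h3
    rw [h1, (sub_eq_zero.mp h3).symm]
  have hWW : Wᴴ * W = Pr := by
    rw [hWdef, conjTranspose_mul, hBpH]
    calc Bp * (s1 * s0)ᴴ * (s1 * s0 * Bp)
        = Bp * (((s1 * s0)ᴴ * (s1 * s0)) * Bp) := by simp only [Matrix.mul_assoc]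
      _ = Bp * ((B * B) * Bp) := by rw [hCC]
      _ = (Bp * B) * (B * Bp) := by simp only [Matrix.mul_assoc]
      _ = Pr * Pr := by rw [hBpB, hBBp]
      _ = Pr := by
          rw [hPrdef, Em_mul_Em]
          refine congrArg (Em hA) (funext fun i => ?_)
          show χ i * χ i = χ i
          by_cases h : Real.sqrt (e i) = 0
          · simp [hχ, h]
          · simp [hχ, mul_inv_cancel₀ h]
  have hW2 : ((1 : Matrix (Fin n) (Fin n) ℂ) - W * Wᴴ).PosSemidef := by
    refine opp W ?_
    rw [hWW]; exact hPr1
  -- projection facts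
  have hP1ρ1 : P1 * ρ1 = ρ1 := proj_fix hP1H hP1idem hP1r
  have hP0ρ0 : P0 * ρ0 = ρ0 := proj_fix hP0H hP0idem hP0r
  obtain ⟨K1, hK1⟩ := sqrt_factor hρ1
  obtain ⟨K0, hK0⟩ := sqrt_factor hρ0
  have hP1s1 : P1 * s1 = s1 := by
    rw [hs1def, hK1, ← Matrix.mul_assoc, hP1ρ1]
  have hP0s0 : P0 * s0 = s0 := by
    rw [hs0def, hK0, ← Matrix.mul_assoc, hP0ρ0]
  have hs1P1 : s1 * P1 = s1 := by
    have h := congrArg Matrix.conjTranspose hP1s1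
    rwa [conjTranspose_mul, hs1H, hP1H.eq] at h
  -- key identities
  have hkey : (s1 * W)ᴴ * (P1 * s0) = B := by
    rw [conjTranspose_mul, hs1H]
    calc Wᴴ * s1 * (P1 * s0) = Wᴴ * ((s1 * P1) * s0) := by simp only [Matrix.mul_assoc]
      _ = Wᴴ * (s1 * s0) := by rw [hs1P1]
      _ = Wᴴ * (W * B) := by rw [hWB]
      _ = (Wᴴ * W) * B := (Matrix.mul_assoc _ _ _).symm
      _ = Pr * B := by rw [hWW]
      _ = B := hPrB
  have hkey2 : (P0 * (s1 * W))ᴴ * s0 = B := by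
    rw [conjTranspose_mul, conjTranspose_mul, hs1H, hP0H.eq]
    calc Wᴴ * s1 * P0 * s0 = Wᴴ * (s1 * (P0 * s0)) := by simp only [Matrix.mul_assoc]
      _ = Wᴴ * (s1 * s0) := by rw [hP0s0]
      _ = Wᴴ * (W * B) := by rw [hWB]
      _ = (Wᴴ * W) * B := (Matrix.mul_assoc _ _ _).symm
      _ = Pr * B := by rw [hWW]
      _ = B := hPrB
  -- trace is a nonnegative real
  have hFnn : (0 : ℂ) ≤ B.trace := trace_nonneg hA.posSemidef_sqrt
  obtain ⟨hre0, him0⟩ := Complex.le_def.mp hFnn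
  simp only [Complex.zero_re, Complex.zero_im] at hre0 him0
  have hFre : ‖B.trace‖ = B.trace.re := by
    have hz : B.trace = ((B.trace.re : ℝ) : ℂ) := by
      apply Complex.ext <;> simp [← him0]
    rw [hz, Complex.norm_real, Real.norm_eq_abs, abs_of_nonneg hre0, Complex.ofReal_re]
  have hρ1re : ρ1.trace.re = 1 := by rw [hρ1tr]; simp
  have hρ0re : ρ0.trace.re = 1 := by rw [hρ0tr]; simp
  constructor
  · -- first inequality
    have hcs := cs_trace (s1 * W) (P1 * s0)
    rw [hkey] at hcs
    have e1 : ((s1 * W)ᴴ * (s1 * W)).trace.re ≤ 1 := by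
      have heq : ((s1 * W)ᴴ * (s1 * W)).trace = (ρ1 * (W * Wᴴ)).trace := by
        rw [trace_mul_comm]
        have hm : (s1 * W) * (s1 * W)ᴴ = s1 * (W * Wᴴ) * s1 := by
          rw [conjTranspose_mul, hs1H]
          simp only [Matrix.mul_assoc]
        rw [hm, trace_mul_cycle, hρ1.sqrt_mul_self]
      rw [heq]
      calc (ρ1 * (W * Wᴴ)).trace.re ≤ ρ1.trace.re := trace_mul_le hρ1 hW2
        _ = 1 := hρ1re
    have e2 : ((P1 * s0)ᴴ * (P1 * s0)).trace = (P1 * ρ0).trace := by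
      rw [conjTranspose_mul, hs0H, hP1H.eq]
      calc (s0 * P1 * (P1 * s0)).trace
          = (s0 * ((P1 * P1) * s0)).trace :=
            congrArg Matrix.trace (by simp only [Matrix.mul_assoc])
        _ = (s0 * (P1 * s0)).trace := by rw [hP1idem]
        _ = ((P1 * s0) * s0).trace := trace_mul_comm _ _
        _ = (P1 * (s0 * s0)).trace := congrArg Matrix.trace (Matrix.mul_assoc _ _ _)
        _ = (P1 * ρ0).trace := by rw [hρ0.sqrt_mul_self]
    have e2nn : 0 ≤ ((P1 * s0)ᴴ * (P1 * s0)).trace.re := by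
      have := trace_nonneg (posSemidef_conjTranspose_mul_self (P1 * s0))
      exact (Complex.le_def.mp this).1.trans_eq' (by simp)
    calc B.trace.re ^ 2 = ‖B.trace‖ ^ 2 := by rw [hFre]
      _ ≤ ((s1 * W)ᴴ * (s1 * W)).trace.re * ((P1 * s0)ᴴ * (P1 * s0)).trace.re := hcs
      _ ≤ 1 * ((P1 * s0)ᴴ * (P1 * s0)).trace.re := by
          exact mul_le_mul_of_nonneg_right e1 e2nn
      _ = (P1 * ρ0).trace.re := by rw [one_mul, e2]
  · -- second inequality
    have hcs := cs_trace (P0 * (s1 * W)) s0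
    rw [hkey2] at hcs
    have hP0psd : P0.PosSemidef := by
      have h := posSemidef_conjTranspose_mul_self P0
      rwa [hP0H.eq, hP0idem] at h
    have hNpsd : (s1 * P0 * s1).PosSemidef := by
      have h := hP0psd.mul_mul_conjTranspose_same s1
      rwa [hs1H] at h
    have e1 : ((P0 * (s1 * W))ᴴ * (P0 * (s1 * W))).trace.re ≤ (P0 * ρ1).trace.re := by
      have hm : (P0 * (s1 * W))ᴴ * (P0 * (s1 * W)) = (s1 * W)ᴴ * P0 * (s1 * W) := by
        rw [conjTranspose_mul, hP0H.eq]
        calc (s1 * W)ᴴ * P0 * (P0 * (s1 * W))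
            = (s1 * W)ᴴ * ((P0 * P0) * (s1 * W)) := by simp only [Matrix.mul_assoc]
          _ = (s1 * W)ᴴ * (P0 * (s1 * W)) := by rw [hP0idem]
          _ = (s1 * W)ᴴ * P0 * (s1 * W) := (Matrix.mul_assoc _ _ _).symm
      have htr : ((s1 * W)ᴴ * P0 * (s1 * W)).trace = ((s1 * P0 * s1) * (W * Wᴴ)).trace := by
        have hm2 : (s1 * W) * ((s1 * W)ᴴ * P0) = s1 * ((W * Wᴴ) * (s1 * P0)) := by
          rw [conjTranspose_mul, hs1H]
          simp only [Matrix.mul_assoc]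
        calc ((s1 * W)ᴴ * P0 * (s1 * W)).trace
            = ((s1 * W) * ((s1 * W)ᴴ * P0)).trace :=
              trace_mul_comm ((s1 * W)ᴴ * P0) (s1 * W)
          _ = (s1 * ((W * Wᴴ) * (s1 * P0))).trace := by rw [hm2]
          _ = (((W * Wᴴ) * (s1 * P0)) * s1).trace := trace_mul_comm _ _
          _ = ((W * Wᴴ) * ((s1 * P0) * s1)).trace :=
              congrArg Matrix.trace (Matrix.mul_assoc _ _ _)
          _ = ((s1 * P0 * s1) * (W * Wᴴ)).trace := trace_mul_comm _ _
      have hle : ((s1 * P0 * s1) * (W * Wᴴ)).trace.re ≤ (s1 * P0 * s1).trace.re :=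
        trace_mul_le hNpsd hW2
      have hNtr : (s1 * P0 * s1).trace = (P0 * ρ1).trace := by
        calc (s1 * P0 * s1).trace = (s1 * (s1 * P0)).trace := trace_mul_comm _ _
          _ = ((s1 * s1) * P0).trace := by rw [← Matrix.mul_assoc]
          _ = (ρ1 * P0).trace := by rw [hρ1.sqrt_mul_self]
          _ = (P0 * ρ1).trace := trace_mul_comm _ _
      rw [hm, htr]
      rw [hNtr] at hle
      exact hle
    have e2 : (s0ᴴ * s0).trace.re = 1 := by
      rw [hs0H, hρ0.sqrt_mul_self, hρ0re]
    have e1nn : 0 ≤ ((P0 * (s1 * W))ᴴ * (P0 * (s1 * W))).trace.re := by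
      have := trace_nonneg (posSemidef_conjTranspose_mul_self (P0 * (s1 * W)))
      exact (Complex.le_def.mp this).1.trans_eq' (by simp)
    calc B.trace.re ^ 2 = ‖B.trace‖ ^ 2 := by rw [hFre]
      _ ≤ ((P0 * (s1 * W))ᴴ * (P0 * (s1 * W))).trace.re * (s0ᴴ * s0).trace.re := hcs
      _ = ((P0 * (s1 * W))ᴴ * (P0 * (s1 * W))).trace.re := by rw [e2, mul_one]
      _ ≤ (P0 * ρ1).trace.re := e1
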